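/- Let n ∈ ℕ, γ > 0, let g : ℝⁿ → ℝ ∪ {+∞}, and define h : ℝⁿ → ℝ ∪ {±∞} by h(α) = inf_{v ∈ ℝⁿ} ( g(v) − ⟨v, α⟩ ). Fix z ∈ [0,1]ⁿ. Then, in the extended reals, sup_{α ∈ ℝⁿ} ( h(α) − (γ/2) Σ_{i=1}^n z_i α_i² ) ≤ inf { g(x) + (1/(2γ)) Σ_{i : z_i > 0} x_i² / z_i : x ∈ ℝⁿ and x_i = 0 for every i with z_i = 0 }. (This is the weak-duality direction of the perspective reformulation of Theorem 3.2, valid also for fractional z.) -/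

import Mathlib

open scoped BigOperators

/-- Weak duality for the perspective reformulation (Theorem 3.2), valid for
fractional `z ∈ [0,1]ⁿ`. -/
theorem perspective_weak_duality (n : ℕ) (γ : ℝ) (hγ : 0 < γ)
    (g : (Fin n → ℝ) → EReal) (hg : ∀ v, g v ≠ ⊥)
    (h : (Fin n → ℝ) → EReal)
    (hh : ∀ α : Fin n → ℝ, h α = ⨅ v : Fin n → ℝ, g v - ((∑ i, v i * α i : ℝ) : EReal))
    (z : Fin n → ℝ) (hz : ∀ i, 0 ≤ z i ∧ z i ≤ 1) :
    (⨆ α : Fin n → ℝ, h α - (((γ / 2) * ∑ i, z i * (α i) ^ 2 : ℝ) : EReal)) ≤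
      ⨅ x : {x : Fin n → ℝ // ∀ i, z i = 0 → x i = 0},
        g x.1 + (((1 / (2 * γ)) *
          ∑ i ∈ Finset.univ.filter (fun i => 0 < z i), (x.1 i) ^ 2 / z i : ℝ) : EReal) := by
  refine le_iInf fun x => iSup_le fun α => ?_
  set A : ℝ := ∑ i, x.1 i * α i with hA
  set C : ℝ := (γ / 2) * ∑ i, z i * (α i) ^ 2 with hC
  set D : ℝ := (1 / (2 * γ)) *
      ∑ i ∈ Finset.univ.filter (fun i => 0 < z i), (x.1 i) ^ 2 / z i with hD
  have key : -A - C ≤ D := by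
    have hsum : ∑ i ∈ Finset.univ.filter (fun i => 0 < z i), (x.1 i) ^ 2 / z i
        = ∑ i, (if 0 < z i then (x.1 i) ^ 2 / z i else 0) :=
      Finset.sum_filter _ _
    have hnn : 0 ≤ ∑ i, ((1 / (2 * γ)) * (if 0 < z i then (x.1 i) ^ 2 / z i else 0)
        + x.1 i * α i + (γ / 2) * (z i * (α i) ^ 2)) := by
      apply Finset.sum_nonneg
      intro i _
      rcases lt_or_eq_of_le (hz i).1 with hzi | hzi
      · rw [if_pos hzi]
        have heq : (1 / (2 * γ)) * ((x.1 i) ^ 2 / z i) + x.1 i * α i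
            + (γ / 2) * (z i * (α i) ^ 2)
            = (x.1 i + γ * z i * α i) ^ 2 / (2 * γ * z i) := by
          field_simp
          ring
        rw [heq]
        positivity
      · rw [if_neg (by rw [← hzi]; exact lt_irrefl 0), ← hzi, x.2 i hzi.symm]
        ring_nf
        positivity
    rw [hD, hsum, Finset.mul_sum, hA, hC, Finset.mul_sum]
    have := Finset.sum_add_distrib (s := (Finset.univ : Finset (Fin n)))
      (f := fun i => (1 / (2 * γ)) * (if 0 < z i then (x.1 i) ^ 2 / z i else 0) + x.1 i * α i)
      (g := fun i => (γ / 2) * (z i * (α i) ^ 2))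
    rw [this, Finset.sum_add_distrib] at hnn
    linarith
  have hα : h α ≤ g x.1 - (A : EReal) := by
    rw [hh]; exact iInf_le _ x.1
  have step1 : h α - (C : EReal) ≤ g x.1 - (A : EReal) - (C : EReal) :=
    add_le_add_left hα _
  refine step1.trans ?_
  induction (g x.1) using EReal.rec with
  | bot => rw [EReal.bot_sub, EReal.bot_sub]; exact bot_le
  | coe r =>
    rw [show ((r : EReal) - (A : EReal) - (C : EReal)) = ((r - A - C : ℝ) : EReal) by
      push_cast; ring,
      show ((r : EReal) + (D : EReal)) = ((r + D : ℝ) : EReal) by push_cast; ring]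
    exact_mod_cast by linarith
  | top =>
    rw [show ((⊤ : EReal) - (A : EReal)) = ⊤ from EReal.top_sub_coe A,
      show ((⊤ : EReal) - (C : EReal)) = ⊤ from EReal.top_sub_coe C]
    exact le_top
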